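/- Let K(t,x) = (λ²/4) I₀(√(λ²((κt)² − x²)/(2κ))) for |x| ≤ κt and 0 otherwise. Then for all t ≥ 0 and x ∈ ℝ: ∫_ℝ K(t,x) dx = |λ|√(κ/2) · sinh(|λ|√(κ/2) t). -/

import Mathlib

open Real MeasureTheory

lemma J_rec (a : ℝ) (k : ℕ) :
    (2*(k:ℝ)+3) * ∫ x in (-a)..a, (a^2 - x^2)^(k+1)
      = 2*((k:ℝ)+1) * a^2 * ∫ x in (-a)..a, (a^2 - x^2)^k := by
  have hH : ∀ x ∈ Set.uIcc (-a) a, HasDerivAt (fun x : ℝ => x * (a^2 - x^2)^(k+1))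
      ((2*(k:ℝ)+3) * (a^2 - x^2)^(k+1) - 2*((k:ℝ)+1) * a^2 * (a^2 - x^2)^k) x := by
    intro x _
    have h1 : HasDerivAt (fun x : ℝ => a^2 - x^2) (-(2*x)) x := by
      simpa using ((hasDerivAt_pow 2 x)).const_sub (a^2)
    have h3 := (hasDerivAt_id x).mul (h1.pow (k+1))
    refine h3.congr_deriv ?_
    simp only [id, Pi.pow_apply]
    push_cast
    ring
  have hcont : Continuous fun x : ℝ => (2*(k:ℝ)+3) * (a^2 - x^2)^(k+1) - 2*((k:ℝ)+1) * a^2 * (a^2 - x^2)^k := by fun_prop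
  have := intervalIntegral.integral_eq_sub_of_hasDerivAt hH (hcont.intervalIntegrable _ _)
  have hz : (a : ℝ) * (a^2 - a^2)^(k+1) - (-a) * (a^2 - (-a)^2)^(k+1) = 0 := by
    simp [pow_succ]
  rw [hz] at this
  have hi1 : IntervalIntegrable (fun x : ℝ => (a^2 - x^2)^(k+1)) volume (-a) a :=
    (by fun_prop : Continuous fun x : ℝ => (a^2-x^2)^(k+1)).intervalIntegrable _ _
  have hi2 : IntervalIntegrable (fun x : ℝ => (a^2 - x^2)^k) volume (-a) a :=
    (by fun_prop : Continuous fun x : ℝ => (a^2-x^2)^k).intervalIntegrable _ _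
  rw [intervalIntegral.integral_sub ((hi1.const_mul _)) ((hi2.const_mul _)),
    intervalIntegral.integral_const_mul, intervalIntegral.integral_const_mul] at this
  linarith

lemma J_val (a : ℝ) (k : ℕ) :
    ∫ x in (-a)..a, (a^2 - x^2)^k
      = 2 * 4^k * ((k.factorial : ℝ))^2 * a^(2*k+1) / ((2*k+1).factorial : ℝ) := by
  induction k with
  | zero => simp; ring
  | succ k ih =>
    have h := J_rec a k
    rw [ih] at h
    have h3 : (2*(k:ℝ)+3) ≠ 0 := by positivity
    have hf1 : ((2*(k+1)+1).factorial : ℝ) = (2*(k:ℝ)+3) * (2*(k:ℝ)+2) * ((2*k+1).factorial : ℝ) := by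
      have he : 2*(k+1)+1 = (2*k+1) + 1 + 1 := by ring
      rw [he]
      simp [Nat.factorial_succ]
      push_cast
      ring
    have hf2 : (((k+1).factorial : ℝ)) = ((k:ℝ)+1) * (k.factorial : ℝ) := by
      simp [Nat.factorial_succ]
    have hfk : ((2*k+1).factorial : ℝ) ≠ 0 := by positivity
    have hX : ∫ x in (-a)..a, (a^2 - x^2)^(k+1)
        = 2*((k:ℝ)+1) * a^2 * (2 * 4^k * ((k.factorial : ℝ))^2 * a^(2*k+1) / ((2*k+1).factorial : ℝ)) / (2*(k:ℝ)+3) := by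
      field_simp at h ⊢
      linarith
    rw [hX, hf1, hf2]
    field_simp
    ring


/-- Modified Bessel function of the first kind of order zero:
`I₀(z) = Σ_{k≥0} (z²/4)ᵏ/(k!)²`. -/
noncomputable def besselI0 (z : ℝ) : ℝ :=
  ∑' k : ℕ, (z ^ 2 / 4) ^ k / (k.factorial : ℝ) ^ 2

/-- `K(t,x) = (λ²/4) I₀(√(λ²((κt)² − x²)/(2κ)))` on `|x| ≤ κt`, zero otherwise. -/
noncomputable def Kker (κ lam t x : ℝ) : ℝ :=
  if |x| ≤ κ * t then
    lam ^ 2 / 4 * besselI0 (Real.sqrt (lam ^ 2 * ((κ * t) ^ 2 - x ^ 2) / (2 * κ)))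
  else 0


theorem Kker_space_integral (κ lam t : ℝ) (hκ : 0 < κ) (hlam : lam ≠ 0) (ht : 0 ≤ t) :
    ∫ x : ℝ, Kker κ lam t x
      = |lam| * Real.sqrt (κ / 2) * Real.sinh (|lam| * Real.sqrt (κ / 2) * t) := by
  set a : ℝ := κ * t with ha
  set c : ℝ := lam ^ 2 / (2 * κ) with hc
  set b : ℝ := |lam| * Real.sqrt (κ / 2) with hb
  have ha0 : 0 ≤ a := mul_nonneg hκ.le ht
  have hc0 : 0 ≤ c := by positivity
  have hb2 : b ^ 2 = lam ^ 2 * (κ / 2) := by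
    rw [hb, mul_pow, sq_abs, Real.sq_sqrt (by positivity : (0:ℝ) ≤ κ/2)]
  -- the summand functions
  set F : ℕ → ℝ → ℝ := fun k => (Set.Icc (-a) a).indicator
    (fun x => lam ^ 2 / 4 * ((c * (a ^ 2 - x ^ 2) / 4) ^ k / (k.factorial : ℝ) ^ 2)) with hF
  -- pointwise identity
  have hpt : ∀ x : ℝ, Kker κ lam t x = ∑' k : ℕ, F k x := by
    intro x
    by_cases hx : |x| ≤ a
    · have hxI : x ∈ Set.Icc (-a) a := abs_le.mp hx
      have hx2 : x ^ 2 ≤ a ^ 2 := sq_le_sq' (abs_le.mp hx).1 (abs_le.mp hx).2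
      have harg : 0 ≤ lam ^ 2 * (a ^ 2 - x ^ 2) / (2 * κ) := by
        have := sub_nonneg.mpr hx2
        positivity
      have hsq : (Real.sqrt (lam ^ 2 * (a ^ 2 - x ^ 2) / (2 * κ))) ^ 2 / 4
          = c * (a ^ 2 - x ^ 2) / 4 := by
        rw [Real.sq_sqrt harg, hc]; ring
      simp only [Kker, ← ha, if_pos hx, besselI0, hsq]
      rw [hF]
      simp only [Set.indicator_of_mem hxI]
      exact (tsum_mul_left).symm
    · have hxI : x ∉ Set.Icc (-a) a := fun h => hx (abs_le.mpr ⟨h.1, h.2⟩)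
      simp only [Kker, ← ha, if_neg hx, hF, Set.indicator_of_notMem hxI, tsum_zero]
  -- integrability of each F k
  have hFc : ∀ k : ℕ, Continuous fun x : ℝ =>
      lam ^ 2 / 4 * ((c * (a ^ 2 - x ^ 2) / 4) ^ k / (k.factorial : ℝ) ^ 2) := by
    intro k; fun_prop
  have hFi : ∀ k : ℕ, Integrable (F k) := by
    intro k
    rw [hF]
    exact (((hFc k).integrableOn_Icc).integrable_indicator measurableSet_Icc)
  -- value of each integral
  have hFval : ∀ k : ℕ, ∫ x : ℝ, F k x = b * ((b * t) ^ (2 * k + 1) / ((2 * k + 1).factorial : ℝ)) := by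
    intro k
    rw [hF, integral_indicator measurableSet_Icc, integral_Icc_eq_integral_Ioc,
      ← intervalIntegral.integral_of_le (by linarith : -a ≤ a)]
    have : ∀ x : ℝ, lam ^ 2 / 4 * ((c * (a ^ 2 - x ^ 2) / 4) ^ k / (k.factorial : ℝ) ^ 2)
        = (lam ^ 2 / 4 * (c / 4) ^ k / (k.factorial : ℝ) ^ 2) * (a ^ 2 - x ^ 2) ^ k := by
      intro x
      have he : (c * (a ^ 2 - x ^ 2) / 4) ^ k = (c / 4) ^ k * (a ^ 2 - x ^ 2) ^ k := by
        rw [← mul_pow]; congr 1; ring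
      rw [he]; ring
    rw [intervalIntegral.integral_congr (fun x _ => this x), intervalIntegral.integral_const_mul,
      J_val]
    have hfk : ((k.factorial : ℝ)) ≠ 0 := by positivity
    have h4 : ((4:ℝ))^k ≠ 0 := by positivity
    -- algebra: lam^2/2 * c^k * a^(2k+1) = b^2 * (b^2)^k * t^(2k+1) and match powers
    have hp : ∀ y : ℝ, y ^ (2*k+1) = (y^2)^k * y := by
      intro y; rw [pow_add, pow_mul, pow_one]
    have key : lam ^ 2 / 4 * (c / 4) ^ k / (k.factorial : ℝ) ^ 2
        * (2 * 4 ^ k * ((k.factorial : ℝ))^2 * a ^ (2*k+1) / ((2*k+1).factorial : ℝ))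
        = (b^2 * (b^2)^k * t^(2*k+1)) / ((2*k+1).factorial : ℝ) := by
      have e0 : c / 4 = lam^2 / (8 * κ) := by rw [hc]; ring
      have e1 : (c/4)^k = (lam^2)^k / (8^k * κ^k) := by
        rw [e0, div_pow, mul_pow]
      have e2 : a ^ (2*k+1) = (κ^2)^k * κ * ((t^2)^k * t) := by
        rw [ha, hp, mul_pow κ t, mul_pow]; ring
      have e4 : (b^2)^k = ((lam^2)^k * κ^k) / 2^k := by
        rw [hb2, mul_pow, div_pow]; ring
      have e8 : (8:ℝ)^k = 4^k * 2^k := by rw [← mul_pow]; norm_num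
      rw [e1, e2, e4, hp t, hb2, e8]
      have hκ0 : (κ:ℝ) ≠ 0 := ne_of_gt hκ
      have hfk2 : ((2*k+1).factorial : ℝ) ≠ 0 := by positivity
      have h2k : ((2:ℝ))^k ≠ 0 := by positivity
      field_simp
      ring
    rw [key, hp (b*t), mul_pow b t, mul_pow]
    ring
  -- nonnegativity and norms
  have hFnn : ∀ k x, 0 ≤ F k x := by
    intro k x
    rw [hF]
    apply Set.indicator_nonneg
    intro y hy
    have hy2 : y ^ 2 ≤ a ^ 2 := sq_le_sq' hy.1 hy.2
    have h1 : 0 ≤ a ^ 2 - y ^ 2 := sub_nonneg.mpr hy2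
    positivity
  have hnormeq : ∀ k : ℕ, (fun x : ℝ => ‖F k x‖) = F k := by
    intro k; funext x; exact norm_of_nonneg (hFnn k x)
  have hsinh := Real.hasSum_sinh (b * t)
  have hsum : Summable fun k : ℕ => b * ((b * t) ^ (2 * k + 1) / (((2 * k + 1).factorial : ℕ) : ℝ)) :=
    hsinh.summable.mul_left b
  have hsumnorm : Summable fun k : ℕ => ∫ x : ℝ, ‖F k x‖ := by
    simp_rw [hnormeq, hFval]
    exact hsum
  calc ∫ x : ℝ, Kker κ lam t x
      = ∫ x : ℝ, ∑' k : ℕ, F k x := by simp_rw [hpt]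
    _ = ∑' k : ℕ, ∫ x : ℝ, F k x :=
        (integral_tsum_of_summable_integral_norm hFi hsumnorm).symm
    _ = b * Real.sinh (b * t) := by
        simp_rw [hFval]
        exact (hsinh.mul_left b).tsum_eq
    _ = |lam| * Real.sqrt (κ / 2) * Real.sinh (|lam| * Real.sqrt (κ / 2) * t) := by
        rw [hb]
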